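/- For all integers k ≥ 2 and h ≥ 2, there exists a feasible schedule for the instance I_k^h whose maximum flow time is at most 2^{k−1}·h + 3; consequently, Opt(I_k^h) ≤ 2^{k−1}·h + 3. -/

import Mathlib

/-!
# Packet forwarding on a line network

There are `k` active routers `1, …, k`; router `i` forwards packets to router `i+1`.
An instance is a finite collection of packets; packet `p` has a release time `rel p : ℕ`,
a start router `start p ∈ {1, …, k}` and a length `len p ≥ 1` with
`start p + len p − 1 ≤ k`; `p` must be forwarded by routers
`start p, start p + 1, …, start p + len p − 1` in this order.
-/

/-- An instance of online packet forwarding on a line network with `k` active routers.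
Packets are indexed by `Fin n`. -/
structure PInstance (k : ℕ) where
  n : ℕ
  rel : Fin n → ℕ
  start : Fin n → ℕ
  len : Fin n → ℕ

namespace PInstance

variable {k : ℕ}

/-- The instance is well-formed: start routers are at least `1`, lengths are at least `1`,
and every packet fits on the line: `start p + len p − 1 ≤ k`. -/
def Valid (I : PInstance k) : Prop :=
  ∀ p, 1 ≤ I.start p ∧ 1 ≤ I.len p ∧ I.start p + I.len p ≤ k + 1

/-- All packets of the instance have length `1` or `2`. -/
def Short (I : PInstance k) : Prop :=
  ∀ p, I.len p = 1 ∨ I.len p = 2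

/-- A schedule assigns to each packet `p` and each hop index `j < len p` (corresponding to
router `start p + j`) the time step at which that router forwards `p`.  Values at
hop indices `j ≥ len p` are irrelevant. -/
abbrev Sched (I : PInstance k) := Fin I.n → ℕ → ℕ

/-- `arr I S p j` is the time from which hop `j` of packet `p` is available:
packet `p` is available at its start router from time `rel p`, and a packet forwarded
at time `t` is available at the next router from time `t + 1`. -/
def arr (I : PInstance k) (S : Sched I) (p : Fin I.n) : ℕ → ℕ
  | 0 => I.rel p
  | j + 1 => S p j + 1

/-- Feasibility of a schedule: every hop is forwarded no earlier than the time from which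
it is available (this includes releases and the order of the hops), and each router
forwards at most one packet in each time step. -/
def Feasible (I : PInstance k) (S : Sched I) : Prop :=
  (∀ p j, j < I.len p → arr I S p j ≤ S p j) ∧
  (∀ p q jp jq, jp < I.len p → jq < I.len q →
    I.start p + jp = I.start q + jq → S p jp = S q jq → p = q)

/-- Completion time `C(p)`: one plus the time step in which the last router forwards `p`. -/
def comp (I : PInstance k) (S : Sched I) (p : Fin I.n) : ℕ :=
  S p (I.len p - 1) + 1

/-- Flow time of packet `p`: `C(p) − r(p)`. -/
def flowTime (I : PInstance k) (S : Sched I) (p : Fin I.n) : ℕ :=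
  comp I S p - I.rel p

/-- Cost of a schedule: the maximum flow time over all packets of the instance. -/
def cost (I : PInstance k) (S : Sched I) : ℕ :=
  Finset.univ.sup (flowTime I S)

/-- `Opt(I)`: the minimum cost over all feasible schedules. -/
noncomputable def opt (I : PInstance k) : ℕ :=
  sInf {c | ∃ S : Sched I, Feasible I S ∧ cost I S = c}

/-- Hop `j` of packet `p` is waiting (available but not yet forwarded) at time `t`. -/
def Waiting (I : PInstance k) (S : Sched I) (p : Fin I.n) (j t : ℕ) : Prop :=
  j < I.len p ∧ arr I S p j ≤ t ∧ t ≤ S p j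

/-- Remaining length `ℓ(p,t)`: the number of routers that still need to forward `p`
at time `t` (under schedule `S`). -/
noncomputable def remLen (I : PInstance k) (S : Sched I) (p : Fin I.n) (t : ℕ) : ℕ :=
  Set.ncard {j : ℕ | j < I.len p ∧ t ≤ S p j}

/-- Priority `π(p,t) = (t − r(p)) + ℓ(p,t)`. -/
noncomputable def prio (I : PInstance k) (S : Sched I) (p : Fin I.n) (t : ℕ) : ℕ :=
  (t - I.rel p) + remLen I S p t

/-- A schedule is zealous if, at every time step and every router at which some packet
is available (waiting), it forwards a packet there. -/
def Zealous (I : PInstance k) (S : Sched I) : Prop :=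
  ∀ t i, (∃ p j, Waiting I S p j t ∧ I.start p + j = i) →
    ∃ q jq, Waiting I S q jq t ∧ I.start q + jq = i ∧ S q jq = t

/-- `S` is a schedule that Greedy (with some tie-breaking rule) produces: it is feasible,
and in every time step, every router at which at least one packet is waiting forwards a
waiting packet of maximum priority among the packets waiting there. -/
def IsGreedy (I : PInstance k) (S : Sched I) : Prop :=
  Feasible I S ∧
  ∀ t i, (∃ p j, Waiting I S p j t ∧ I.start p + j = i) →
    ∃ q jq, Waiting I S q jq t ∧ I.start q + jq = i ∧ S q jq = t ∧
      ∀ p j, Waiting I S p j t → I.start p + j = i → prio I S p t ≤ prio I S q t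

/-- The number of packets released by time `t` that still need to be forwarded by
router `i` at time `t` under schedule `S`. -/
noncomputable def needs (I : PInstance k) (S : Sched I) (i t : ℕ) : ℕ :=
  Set.ncard {p : Fin I.n | I.rel p ≤ t ∧ ∃ j, j < I.len p ∧ I.start p + j = i ∧ t ≤ S p j}

end PInstance

/-- Build an instance from a list of packets, each given as a triple
(release time, start router, length). -/
def ofTriples (k : ℕ) (L : List (ℕ × ℕ × ℕ)) : PInstance k where
  n := L.length
  rel p := (L.get p).1
  start p := (L.get p).2.1
  len p := (L.get p).2.2

/-- The size `|B_j| = (2^{k−1} − 2^{k−1−j})·h` of block `B_j` of the instance `I_k^h`. -/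
def sizeB (k h j : ℕ) : ℕ := (2 ^ (k - 1) - 2 ^ (k - 1 - j)) * h

/-- The release-time offset `r_i = (Σ_{j=1}^{i-1} |B_j|) + max {0, i − 2}`. -/
def rIdx (k h i : ℕ) : ℕ := (∑ j ∈ Finset.Icc 1 (i - 1), sizeB k h j) + (i - 2)

/-- Block `A_i` (for `1 ≤ i ≤ k − 1`): `2^{k−1−i}·h` packets released at time `r_i` at
router `max {1, i−1}`, of length `1` if `i = 1` and of length `2` if `i ≥ 2`. -/
def blockA (k h i : ℕ) : List (ℕ × ℕ × ℕ) :=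
  List.replicate (2 ^ (k - 1 - i) * h) (rIdx k h i, max 1 (i - 1), if i = 1 then 1 else 2)

/-- Block `B_i` (for `1 ≤ i ≤ k − 1`): `(2^{k−1} − 2^{k−1−i})·h` packets of length `2`
released at time `r_i + 2` at router `i`. -/
def blockB (k h i : ℕ) : List (ℕ × ℕ × ℕ) :=
  List.replicate (sizeB k h i) (rIdx k h i + 2, i, 2)

/-- Block `B_k`: `2^{k−1}·h` packets of length `1` released at time `r_k + 2` at router `k`. -/
def blockBk (k h : ℕ) : List (ℕ × ℕ × ℕ) :=
  List.replicate (2 ^ (k - 1) * h) (rIdx k h k + 2, k, 1)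

/-- The lower-bound instance `I_k^h`: it consists of the blocks `A_i` and `B_i` for
`1 ≤ i ≤ k − 1`, together with the block `B_k`. -/
def Ikh (k h : ℕ) : PInstance k :=
  ofTriples k
    ((((List.range (k - 1)).map (· + 1)).flatMap fun i => blockA k h i ++ blockB k h i)
      ++ blockBk k h)

namespace IkhUB

lemma pow_sub_le (k i : ℕ) : (2:ℕ)^(k-1-i) ≤ 2^(k-1) :=
  Nat.pow_le_pow_right (by norm_num) (Nat.sub_le _ _)

lemma AB_sum (k h i : ℕ) : 2^(k-1-i)*h + sizeB k h i = 2^(k-1)*h := by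
  have := pow_sub_le k i
  unfold sizeB
  rw [← Nat.add_mul]
  congr 1
  omega

lemma rIdx_one (k h : ℕ) : rIdx k h 1 = 0 := by
  have e : Finset.Icc 1 0 = (∅ : Finset ℕ) := Finset.Icc_eq_empty (by omega)
  simp [rIdx, e]

lemma rIdx_two (k h : ℕ) : rIdx k h 2 = sizeB k h 1 := by
  simp [rIdx, Finset.Icc_self]

lemma rIdx_succ (k h i : ℕ) (hi : 2 ≤ i) :
    rIdx k h (i+1) = rIdx k h i + sizeB k h i + 1 := by
  unfold rIdx
  rw [show i+1-1 = (i-1)+1 by omega, Finset.sum_Icc_succ_top (by omega)]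
  rw [show (i-1)+1 = i by omega]
  omega

lemma A_prev_le_B (k h i : ℕ) (h2 : 2 ≤ i) (hik : i ≤ k-1) :
    2^(k-i)*h ≤ sizeB k h i := by
  unfold sizeB
  apply Nat.mul_le_mul_right
  have h1 : k-i+1 ≤ k-1 := by omega
  have h2 : (2:ℕ)^(k-i) + 2^(k-i) ≤ 2^(k-i+1) := by rw [pow_succ]; omega
  have h3 : (2:ℕ)^(k-i+1) ≤ 2^(k-1) := Nat.pow_le_pow_right (by norm_num) h1
  have h4 : (2:ℕ)^(k-1-i) ≤ 2^(k-i) := Nat.pow_le_pow_right (by norm_num) (by omega)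
  omega

lemma A_le_B (k h i : ℕ) (h1 : 1 ≤ i) (hik : i ≤ k-1) :
    2^(k-1-i)*h ≤ sizeB k h i := by
  unfold sizeB
  apply Nat.mul_le_mul_right
  have e1 : k-1-i+1 ≤ k-1 := by omega
  have e2 : (2:ℕ)^(k-1-i) + 2^(k-1-i) ≤ 2^(k-1-i+1) := by rw [pow_succ]; omega
  have e3 : (2:ℕ)^(k-1-i+1) ≤ 2^(k-1) := Nat.pow_le_pow_right (by norm_num) e1
  omega

def tripAux (k h i w : ℕ) : ℕ × ℕ × ℕ :=
  if i = k then (rIdx k h k + 2, k, 1)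
  else if w < 2^(k-1-i)*h then (rIdx k h i, max 1 (i-1), if i = 1 then 1 else 2)
  else (rIdx k h i + 2, i, 2)

def schedAux (k h i w j : ℕ) : ℕ :=
  if i = k then rIdx k h k + 3 + w
  else if w < 2^(k-1-i)*h then
    if i = 1 then rIdx k h 2 + 2 + w
    else if j = 0 then rIdx k h i + 2 + 2^(k-i)*h + w
    else rIdx k h (i+1) + 2 + w
  else
    if i = 1 then 2 + (w - 2^(k-1-i)*h) + j
    else rIdx k h i + 3 + (w - 2^(k-1-i)*h) + j

def dec (k h m t : ℕ) : ℕ :=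
  if m = k ∧ rIdx k h k + 3 ≤ t then (k-1)*(2^(k-1)*h) + (t - (rIdx k h k + 3))
  else if 2 ≤ m ∧ t ≤ rIdx k h m + 2 then
    (m-2)*(2^(k-1)*h) + 2^(k-1-(m-1))*h + (t - (if m = 2 then 3 else rIdx k h (m-1) + 4))
  else if t ≤ rIdx k h (m+1) + 1 then
    (m-1)*(2^(k-1)*h) + 2^(k-1-m)*h + (t - (if m = 1 then 2 else rIdx k h m + 3))
  else if t ≤ rIdx k h (m+1) + 1 + 2^(k-1-m)*h then
    (m-1)*(2^(k-1)*h) + (t - (rIdx k h (m+1) + 2))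
  else
    m*(2^(k-1)*h) + (t - (rIdx k h (m+1) + 2 + 2^(k-1-m)*h))

section FM
variable {α : Type*} (F : ℕ → List α) (N : ℕ)

lemma fm_len (hF : ∀ i, (F i).length = N) :
    ∀ m, (((List.range m).map (· + 1)).flatMap F).length = m * N := by
  intro m
  induction m with
  | zero => simp
  | succ m ih =>
      rw [List.range_succ, List.map_append, List.flatMap_append, List.length_append, ih]
      simp [hF, Nat.succ_mul]

lemma fm_get (hN : 0 < N) (hF : ∀ i, (F i).length = N) :
    ∀ (m v : ℕ), v < m * N →
      ∀ (h1 : v < (((List.range m).map (· + 1)).flatMap F).length)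
        (h2 : v % N < (F (v/N+1)).length),
      (((List.range m).map (· + 1)).flatMap F)[v] = (F (v/N+1))[v % N] := by
  intro m
  induction m with
  | zero => intro v hv; omega
  | succ m ih =>
      intro v hv h1 h2
      have hsplit : ((List.range (m+1)).map (· + 1)).flatMap F
          = (((List.range m).map (· + 1)).flatMap F) ++ F (m+1) := by
        rw [List.range_succ, List.map_append, List.flatMap_append]; simp
      rw [List.getElem_of_eq hsplit h1]
      by_cases hlt : v < m * N
      · have hlen : v < (((List.range m).map (· + 1)).flatMap F).length := by
          rw [fm_len F N hF m]; exact hlt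
        rw [List.getElem_append_left hlen]
        exact ih v hlt hlen h2
      · have hdiv : v / N = m := by
          have u1 : m ≤ v / N := (Nat.le_div_iff_mul_le hN).mpr (by omega)
          have u2 : v / N < m + 1 := (Nat.div_lt_iff_lt_mul hN).mpr (by omega)
          omega
        have hmod : v % N = v - m * N := by
          have := Nat.div_add_mod v N
          rw [hdiv, Nat.mul_comm] at this
          omega
        have hlen : (((List.range m).map (· + 1)).flatMap F).length ≤ v := by
          rw [fm_len F N hF m]; omega
        rw [List.getElem_append_right hlen]
        have e1 : v - ((List.map (· + 1) (List.range m)).flatMap F).length = v % N := by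
          rw [fm_len F N hF m]; omega
        simp only [e1, hdiv]

end FM


lemma chunk_len (k h : ℕ) : ∀ i, (blockA k h i ++ blockB k h i).length = 2^(k-1)*h := by
  intro i
  rw [List.length_append]
  simp only [blockA, blockB, List.length_replicate]
  exact AB_sum k h i

lemma Ikh_n (k h : ℕ) (hk : 2 ≤ k) : (Ikh k h).n = k * (2^(k-1)*h) := by
  obtain ⟨m, rfl⟩ : ∃ m, k = m + 2 := ⟨k-2, by omega⟩
  show ((((List.range (m+2-1)).map (· + 1)).flatMap
      fun i => blockA (m+2) h i ++ blockB (m+2) h i) ++ blockBk (m+2) h).length = _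
  rw [List.length_append, fm_len _ _ (chunk_len (m+2) h)]
  simp only [blockBk, List.length_replicate, show m+2-1 = m+1 from by omega]
  ring

lemma trip_spec (k h : ℕ) (hk : 2 ≤ k) (hh : 1 ≤ h) (p : Fin (Ikh k h).n) :
    ((Ikh k h).rel p, (Ikh k h).start p, (Ikh k h).len p)
      = tripAux k h (p.val / (2^(k-1)*h) + 1) (p.val % (2^(k-1)*h)) := by
  have hN : 0 < 2^(k-1)*h := Nat.mul_pos (Nat.pow_pos (by norm_num)) (by omega)
  set N := 2^(k-1)*h with hNdef
  have hv : p.val < k * N := lt_of_lt_of_eq p.isLt (Ikh_n k h hk)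
  have e0 : ((Ikh k h).rel p, (Ikh k h).start p, (Ikh k h).len p)
      = ((((List.range (k - 1)).map (· + 1)).flatMap fun i => blockA k h i ++ blockB k h i)
          ++ blockBk k h).get ⟨p.val, by have := p.isLt; exact this⟩ := rfl
  rw [e0, List.get_eq_getElem]
  by_cases hcase : p.val < (k-1) * N
  · have hb1 : p.val < ((((List.range (k - 1)).map (· + 1)).flatMap
        fun i => blockA k h i ++ blockB k h i)).length := by
      rw [fm_len _ _ (chunk_len k h), ← hNdef]; exact hcase
    rw [List.getElem_append_left hb1]
    have hb2 : p.val % N < (blockA k h (p.val/N+1) ++ blockB k h (p.val/N+1)).length := by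
      rw [chunk_len]; exact Nat.mod_lt _ hN
    rw [fm_get _ N hN (chunk_len k h) (k-1) p.val hcase hb1 hb2]
    have hik : p.val / N + 1 ≠ k := by
      have := (Nat.div_lt_iff_lt_mul hN).mpr hcase
      omega
    unfold tripAux
    rw [if_neg hik]
    by_cases hA : p.val % N < 2^(k-1-(p.val/N+1))*h
    · rw [if_pos hA]
      have hbA : p.val % N < (blockA k h (p.val/N+1)).length := by
        simpa [blockA] using hA
      rw [List.getElem_append_left hbA]
      simp [blockA]
    · rw [if_neg hA]
      have hbA : (blockA k h (p.val/N+1)).length ≤ p.val % N := by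
        simp only [blockA, List.length_replicate]; omega
      rw [List.getElem_append_right hbA]
      simp [blockB]
  · have hb1 : ((((List.range (k - 1)).map (· + 1)).flatMap
        fun i => blockA k h i ++ blockB k h i)).length ≤ p.val := by
      rw [fm_len _ _ (chunk_len k h), ← hNdef]; omega
    rw [List.getElem_append_right hb1]
    have hdiv : p.val / N = k - 1 := by
      have u1 : k-1 ≤ p.val / N := (Nat.le_div_iff_mul_le hN).mpr (by omega)
      have u2 : p.val / N < k := (Nat.div_lt_iff_lt_mul hN).mpr (by omega)
      omega
    unfold tripAux
    rw [if_pos (by omega : p.val / N + 1 = k)]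
    simp [blockBk]


lemma len_mem (k h i w : ℕ) : (tripAux k h i w).2.2 = 1 ∨ (tripAux k h i w).2.2 = 2 := by
  unfold tripAux
  split_ifs <;> simp

lemma avail0 (k h i w : ℕ) : (tripAux k h i w).1 ≤ schedAux k h i w 0 := by
  have e1 := rIdx_one k h
  by_cases hik' : i = k
  · have e_r : (tripAux k h i w).1 = rIdx k h k + 2 := by unfold tripAux; rw [if_pos hik']
    have e_t : schedAux k h i w 0 = rIdx k h k + 3 + w := by unfold schedAux; rw [if_pos hik']
    rw [e_r, e_t]; omega
  · by_cases hA : w < 2^(k-1-i)*h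
    · have e_r : (tripAux k h i w).1 = rIdx k h i := by
        unfold tripAux; rw [if_neg hik', if_pos hA]
      by_cases hi1' : i = 1
      · have e_t : schedAux k h i w 0 = rIdx k h 2 + 2 + w := by
          unfold schedAux; rw [if_neg hik', if_pos hA, if_pos hi1']
        rw [e_r, e_t, hi1', e1]; omega
      · have e_t : schedAux k h i w 0 = rIdx k h i + 2 + 2^(k-i)*h + w := by
          unfold schedAux; rw [if_neg hik', if_pos hA, if_neg hi1', if_pos rfl]
        rw [e_r, e_t]; omega
    · have e_r : (tripAux k h i w).1 = rIdx k h i + 2 := by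
        unfold tripAux; rw [if_neg hik', if_neg hA]
      by_cases hi1' : i = 1
      · have e_t : schedAux k h i w 0 = 2 + (w - 2^(k-1-i)*h) + 0 := by
          unfold schedAux; rw [if_neg hik', if_neg hA, if_pos hi1']
        rw [e_r, e_t, hi1', e1]; omega
      · have e_t : schedAux k h i w 0 = rIdx k h i + 3 + (w - 2^(k-1-i)*h) + 0 := by
          unfold schedAux; rw [if_neg hik', if_neg hA, if_neg hi1']
        rw [e_r, e_t]; omega

lemma avail1 (k h i w : ℕ) (hk : 2 ≤ k) (hi1 : 1 ≤ i) (hik : i ≤ k)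
    (hlen2 : (tripAux k h i w).2.2 = 2) :
    schedAux k h i w 0 + 1 ≤ schedAux k h i w 1 := by
  unfold tripAux at hlen2
  by_cases hik' : i = k
  · rw [if_pos hik'] at hlen2; simp at hlen2
  · rw [if_neg hik'] at hlen2
    by_cases hA : w < 2^(k-1-i)*h
    · rw [if_pos hA] at hlen2
      simp only at hlen2
      have hi1' : i ≠ 1 := by
        intro e; rw [if_pos e] at hlen2; exact absurd hlen2 (by norm_num)
      unfold schedAux
      rw [if_neg hik', if_neg hik', if_pos hA, if_pos hA, if_neg hi1', if_neg hi1',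
        if_pos rfl, if_neg (by norm_num : (1:ℕ) ≠ 0)]
      have h2i : 2 ≤ i := by omega
      have hik1 : i ≤ k - 1 := by omega
      have hRS := rIdx_succ k h i h2i
      have hAB := A_prev_le_B k h i h2i hik1
      omega
    · unfold schedAux
      rw [if_neg hik', if_neg hik', if_neg hA, if_neg hA]
      by_cases hi1' : i = 1
      · rw [if_pos hi1', if_pos hi1'] <;> omega
      · rw [if_neg hi1', if_neg hi1'] <;> omega

lemma flow_bound (k h i w : ℕ) (hk : 2 ≤ k) (hh : 1 ≤ h) (hi1 : 1 ≤ i) (hik : i ≤ k)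
    (hw : w < 2^(k-1)*h) :
    schedAux k h i w ((tripAux k h i w).2.2 - 1) + 1 ≤ (tripAux k h i w).1 + (2^(k-1)*h + 3) := by
  by_cases hik' : i = k
  · have e_l : (tripAux k h i w).2.2 = 1 := by unfold tripAux; rw [if_pos hik']
    have e_r : (tripAux k h i w).1 = rIdx k h k + 2 := by unfold tripAux; rw [if_pos hik']
    have e_t : schedAux k h i w (1-1) = rIdx k h k + 3 + w := by
      unfold schedAux; rw [if_pos hik']
    rw [e_l, e_r, e_t]
    omega
  · by_cases hA : w < 2^(k-1-i)*h
    · by_cases hi1' : i = 1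
      · subst hi1'
        have e_l : (tripAux k h 1 w).2.2 = 1 := by
          unfold tripAux; rw [if_neg hik', if_pos hA, if_pos rfl]
        have e_r : (tripAux k h 1 w).1 = rIdx k h 1 := by
          unfold tripAux; rw [if_neg hik', if_pos hA]
        have e_t : schedAux k h 1 w (1-1) = rIdx k h 2 + 2 + w := by
          unfold schedAux; rw [if_neg hik', if_pos hA, if_pos rfl]
        rw [e_l, e_r, e_t]
        have e1 := rIdx_one k h
        have e2 := rIdx_two k h
        have e3 := AB_sum k h 1
        omega
      · have h2i : 2 ≤ i := by omega
        have e_l : (tripAux k h i w).2.2 = 2 := by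
          unfold tripAux; rw [if_neg hik', if_pos hA, if_neg hi1']
        have e_r : (tripAux k h i w).1 = rIdx k h i := by
          unfold tripAux; rw [if_neg hik', if_pos hA]
        have e_t : schedAux k h i w (2-1) = rIdx k h (i+1) + 2 + w := by
          unfold schedAux
          rw [if_neg hik', if_pos hA, if_neg hi1', if_neg (by norm_num : (2:ℕ)-1 ≠ 0)]
        rw [e_l, e_r, e_t]
        have hRS := rIdx_succ k h i h2i
        have e3 := AB_sum k h i
        omega
    · by_cases hi1' : i = 1
      · subst hi1'
        have e_l : (tripAux k h 1 w).2.2 = 2 := by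
          unfold tripAux; rw [if_neg hik', if_neg hA]
        have e_r : (tripAux k h 1 w).1 = rIdx k h 1 + 2 := by
          unfold tripAux; rw [if_neg hik', if_neg hA]
        have e_t : schedAux k h 1 w (2-1) = 2 + (w - 2^(k-1-1)*h) + (2-1) := by
          unfold schedAux; rw [if_neg hik', if_neg hA, if_pos rfl]
        rw [e_l, e_r, e_t]
        have e1 := rIdx_one k h
        omega
      · have e_l : (tripAux k h i w).2.2 = 2 := by
          unfold tripAux; rw [if_neg hik', if_neg hA]
        have e_r : (tripAux k h i w).1 = rIdx k h i + 2 := by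
          unfold tripAux; rw [if_neg hik', if_neg hA]
        have e_t : schedAux k h i w (2-1) = rIdx k h i + 3 + (w - 2^(k-1-i)*h) + (2-1) := by
          unfold schedAux; rw [if_neg hik', if_neg hA, if_neg hi1']
        rw [e_l, e_r, e_t]
        omega

lemma dec_schedAux (k h i w j : ℕ) (hk : 2 ≤ k) (hh : 1 ≤ h) (hi1 : 1 ≤ i) (hik : i ≤ k)
    (hw : w < 2^(k-1)*h) (hj : j < (tripAux k h i w).2.2) :
    dec k h ((tripAux k h i w).2.1 + j) (schedAux k h i w j)
      = (i-1)*(2^(k-1)*h) + w := by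
  by_cases hik' : i = k
  · rw [hik'] at hj ⊢
    have e_l : (tripAux k h k w).2.2 = 1 := by unfold tripAux; rw [if_pos rfl]
    have hj0 : j = 0 := by rw [e_l] at hj; omega
    subst hj0
    have e_s : (tripAux k h k w).2.1 = k := by unfold tripAux; rw [if_pos rfl]
    have e_t : schedAux k h k w 0 = rIdx k h k + 3 + w := by
      unfold schedAux; rw [if_pos rfl]
    rw [e_s, e_t]
    unfold dec
    rw [if_pos ⟨by omega, by omega⟩]
    omega
  · by_cases hA : w < 2^(k-1-i)*h
    · by_cases hi1' : i = 1
      · -- class A₁ : single hop at router 1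
        subst hi1'
        have e_l : (tripAux k h 1 w).2.2 = 1 := by
          unfold tripAux; rw [if_neg hik', if_pos hA, if_pos rfl]
        have hj0 : j = 0 := by rw [e_l] at hj; omega
        subst hj0
        have e_s : (tripAux k h 1 w).2.1 = 1 := by
          unfold tripAux; rw [if_neg hik', if_pos hA]; simp
        have e_t : schedAux k h 1 w 0 = rIdx k h 2 + 2 + w := by
          unfold schedAux; rw [if_neg hik', if_pos hA, if_pos rfl]
        rw [e_s, e_t, Nat.add_zero]
        unfold dec
        rw [show (1:ℕ) + 1 = 2 from rfl]
        rw [if_neg (by rintro ⟨e, -⟩; omega), if_neg (by rintro ⟨e, -⟩; omega)]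
        rw [if_neg (by omega), if_pos (by omega)]
        omega
      · -- class Aᵢ, 2 ≤ i ≤ k-1, two hops
        have h2i : 2 ≤ i := by omega
        have hik1 : i ≤ k - 1 := by omega
        have e_l : (tripAux k h i w).2.2 = 2 := by
          unfold tripAux; rw [if_neg hik', if_pos hA, if_neg hi1']
        have e_s : (tripAux k h i w).2.1 = i - 1 := by
          unfold tripAux; rw [if_neg hik', if_pos hA]
          exact max_eq_right (by omega)
        have hRprev : 3 ≤ i → rIdx k h i = rIdx k h (i-1) + sizeB k h (i-1) + 1 := by
          intro h3
          have := rIdx_succ k h (i-1) (by omega)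
          rwa [show i-1+1 = i from by omega] at this
        have hRS := rIdx_succ k h i h2i
        have hj01 : j = 0 ∨ j = 1 := by rw [e_l] at hj; omega
        rcases hj01 with rfl | rfl
        · have e_t : schedAux k h i w 0 = rIdx k h i + 2 + 2^(k-i)*h + w := by
            unfold schedAux; rw [if_neg hik', if_pos hA, if_neg hi1', if_pos rfl]
          rw [e_s, e_t, Nat.add_zero]
          unfold dec
          rw [show i-1+1 = i from by omega, show k-1-(i-1) = k-i from by omega]
          rw [if_neg (by rintro ⟨e, -⟩; omega)]
          rw [if_neg (by rintro ⟨hm2, hle⟩; have := hRprev (by omega); omega)]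
          rw [if_neg (by omega), if_neg (by omega)]
          omega
        · have e_t : schedAux k h i w 1 = rIdx k h (i+1) + 2 + w := by
            unfold schedAux
            rw [if_neg hik', if_pos hA, if_neg hi1', if_neg (by norm_num : (1:ℕ) ≠ 0)]
          rw [e_s, e_t, show i-1+1 = i from by omega]
          unfold dec
          rw [if_neg (by rintro ⟨e, -⟩; omega)]
          rw [if_neg (by rintro ⟨-, hle⟩; omega)]
          rw [if_neg (by omega), if_pos (by omega)]
          omega
    · -- class Bᵢ
      have hw' : w - 2^(k-1-i)*h < sizeB k h i := by
        have := AB_sum k h i; omega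
      by_cases hi1' : i = 1
      · subst hi1'
        have e_l : (tripAux k h 1 w).2.2 = 2 := by
          unfold tripAux; rw [if_neg hik', if_neg hA]
        have e_s : (tripAux k h 1 w).2.1 = 1 := by
          unfold tripAux; rw [if_neg hik', if_neg hA]
        have e1 := rIdx_one k h
        have e2 := rIdx_two k h
        have hj01 : j = 0 ∨ j = 1 := by rw [e_l] at hj; omega
        rcases hj01 with rfl | rfl
        · have e_t : schedAux k h 1 w 0 = 2 + (w - 2^(k-1-1)*h) + 0 := by
            unfold schedAux; rw [if_neg hik', if_neg hA, if_pos rfl]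
          rw [e_s, e_t, Nat.add_zero, Nat.add_zero]
          unfold dec
          rw [if_neg (by rintro ⟨e, -⟩; omega), if_neg (by rintro ⟨e, -⟩; omega)]
          rw [show (1:ℕ)+1 = 2 from rfl]
          rw [if_pos (by omega), if_pos rfl]
          omega
        · have e_t : schedAux k h 1 w 1 = 2 + (w - 2^(k-1-1)*h) + 1 := by
            unfold schedAux; rw [if_neg hik', if_neg hA, if_pos rfl]
          rw [e_s, e_t, show (1:ℕ)+1 = 2 from rfl]
          unfold dec
          rw [if_neg (by
            rintro ⟨e, hle⟩
            have ek : rIdx k h k = rIdx k h 2 := by rw [← e]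
            omega)]
          rw [if_pos (⟨by omega, by omega⟩ : 2 ≤ 2 ∧ 2 + (w - 2^(k-1-1)*h) + 1 ≤ rIdx k h 2 + 2)]
          rw [if_pos rfl]
          rw [show (2:ℕ)-2 = 0 from rfl, show (2:ℕ)-1 = 1 from rfl]
          omega
      · have h2i : 2 ≤ i := by omega
        have hik1 : i ≤ k - 1 := by omega
        have hRS := rIdx_succ k h i h2i
        have e_l : (tripAux k h i w).2.2 = 2 := by
          unfold tripAux; rw [if_neg hik', if_neg hA]
        have e_s : (tripAux k h i w).2.1 = i := by
          unfold tripAux; rw [if_neg hik', if_neg hA]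
        have hj01 : j = 0 ∨ j = 1 := by rw [e_l] at hj; omega
        rcases hj01 with rfl | rfl
        · have e_t : schedAux k h i w 0 = rIdx k h i + 3 + (w - 2^(k-1-i)*h) + 0 := by
            unfold schedAux; rw [if_neg hik', if_neg hA, if_neg hi1']
          rw [e_s, e_t, Nat.add_zero, Nat.add_zero]
          unfold dec
          rw [if_neg (by rintro ⟨e, -⟩; omega)]
          rw [if_neg (by rintro ⟨-, hle⟩; omega)]
          rw [if_pos (by omega), if_neg hi1']
          omega
        · have e_t : schedAux k h i w 1 = rIdx k h i + 3 + (w - 2^(k-1-i)*h) + 1 := by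
            unfold schedAux; rw [if_neg hik', if_neg hA, if_neg hi1']
          rw [e_s, e_t]
          unfold dec
          rw [if_neg (by
            rintro ⟨e, hle⟩
            have ek : rIdx k h k = rIdx k h (i+1) := by rw [← e]
            omega)]
          rw [if_pos (⟨by omega, by omega⟩ : 2 ≤ i+1 ∧
            rIdx k h i + 3 + (w - 2^(k-1-i)*h) + 1 ≤ rIdx k h (i+1) + 2)]
          rw [if_neg (by omega : ¬(i+1 = 2))]
          rw [show i+1-2 = i-1 from by omega, show i+1-1 = i from by omega]
          omega

end IkhUB


/-- For all integers `k ≥ 2` and `h ≥ 2`, there exists a feasible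
schedule for the instance `I_k^h` whose maximum flow time is at most `2^{k−1}·h + 3`;
consequently, `Opt(I_k^h) ≤ 2^{k−1}·h + 3`. -/
theorem opt_Ikh_upper (k h : ℕ) (hk : 2 ≤ k) (hh : 2 ≤ h) :
    (∃ S : PInstance.Sched (Ikh k h), (Ikh k h).Feasible S ∧
      (Ikh k h).cost S ≤ 2 ^ (k - 1) * h + 3) ∧
    (Ikh k h).opt ≤ 2 ^ (k - 1) * h + 3 := by
  have hh1 : 1 ≤ h := by omega
  have hN : 0 < 2^(k-1)*h := Nat.mul_pos (Nat.pow_pos (by norm_num)) (by omega)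
  have main : ∃ S : PInstance.Sched (Ikh k h), (Ikh k h).Feasible S ∧
      (Ikh k h).cost S ≤ 2 ^ (k - 1) * h + 3 := by
    refine ⟨fun p j => IkhUB.schedAux k h (p.val / (2^(k-1)*h) + 1) (p.val % (2^(k-1)*h)) j,
      ⟨?_, ?_⟩, ?_⟩
    · -- availability
      intro p j hj
      have hvlt : p.val < k * (2^(k-1)*h) := lt_of_lt_of_eq p.isLt (IkhUB.Ikh_n k h hk)
      have hik : p.val / (2^(k-1)*h) + 1 ≤ k := by
        have := (Nat.div_lt_iff_lt_mul hN).mpr hvlt; omega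
      have ht := IkhUB.trip_spec k h hk hh1 p
      have e_rel : (Ikh k h).rel p
          = (IkhUB.tripAux k h (p.val / (2^(k-1)*h) + 1) (p.val % (2^(k-1)*h))).1 := by
        rw [← ht]
      have e_len : (Ikh k h).len p
          = (IkhUB.tripAux k h (p.val / (2^(k-1)*h) + 1) (p.val % (2^(k-1)*h))).2.2 := by
        rw [← ht]
      cases j with
      | zero =>
          show (Ikh k h).rel p ≤ _
          rw [e_rel]
          exact IkhUB.avail0 k h _ _
      | succ j =>
          rw [e_len] at hj
          have hlen2 : (IkhUB.tripAux k h (p.val / (2^(k-1)*h) + 1)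
              (p.val % (2^(k-1)*h))).2.2 = 2 := by
            rcases IkhUB.len_mem k h (p.val / (2^(k-1)*h) + 1) (p.val % (2^(k-1)*h)) with e | e
            · omega
            · exact e
          have hj0 : j = 0 := by omega
          subst hj0
          exact IkhUB.avail1 k h (p.val / (2^(k-1)*h) + 1) (p.val % (2^(k-1)*h)) hk (Nat.le_add_left 1 _) hik hlen2
    · -- no conflicts
      intro p q jp jq hjp hjq hr htimes
      have hvltp : p.val < k * (2^(k-1)*h) := lt_of_lt_of_eq p.isLt (IkhUB.Ikh_n k h hk)
      have hvltq : q.val < k * (2^(k-1)*h) := lt_of_lt_of_eq q.isLt (IkhUB.Ikh_n k h hk)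
      have hikp : p.val / (2^(k-1)*h) + 1 ≤ k := by
        have := (Nat.div_lt_iff_lt_mul hN).mpr hvltp; omega
      have hikq : q.val / (2^(k-1)*h) + 1 ≤ k := by
        have := (Nat.div_lt_iff_lt_mul hN).mpr hvltq; omega
      have htp := IkhUB.trip_spec k h hk hh1 p
      have htq := IkhUB.trip_spec k h hk hh1 q
      have e_start_p : (Ikh k h).start p
          = (IkhUB.tripAux k h (p.val / (2^(k-1)*h) + 1) (p.val % (2^(k-1)*h))).2.1 := by
        rw [← htp]
      have e_start_q : (Ikh k h).start q
          = (IkhUB.tripAux k h (q.val / (2^(k-1)*h) + 1) (q.val % (2^(k-1)*h))).2.1 := by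
        rw [← htq]
      have e_len_p : (Ikh k h).len p
          = (IkhUB.tripAux k h (p.val / (2^(k-1)*h) + 1) (p.val % (2^(k-1)*h))).2.2 := by
        rw [← htp]
      have e_len_q : (Ikh k h).len q
          = (IkhUB.tripAux k h (q.val / (2^(k-1)*h) + 1) (q.val % (2^(k-1)*h))).2.2 := by
        rw [← htq]
      have hp := IkhUB.dec_schedAux k h (p.val / (2^(k-1)*h) + 1) (p.val % (2^(k-1)*h)) jp
        hk hh1 (Nat.le_add_left 1 _) hikp (Nat.mod_lt _ hN) (by rw [← e_len_p]; exact hjp)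
      have hq := IkhUB.dec_schedAux k h (q.val / (2^(k-1)*h) + 1) (q.val % (2^(k-1)*h)) jq
        hk hh1 (Nat.le_add_left 1 _) hikq (Nat.mod_lt _ hN) (by rw [← e_len_q]; exact hjq)
      simp only [Nat.add_sub_cancel] at hp hq
      have hv_p : (p.val / (2^(k-1)*h)) * (2^(k-1)*h) + p.val % (2^(k-1)*h) = p.val := by
        have := Nat.div_add_mod p.val (2^(k-1)*h)
        rw [Nat.mul_comm] at this
        exact this
      have hv_q : (q.val / (2^(k-1)*h)) * (2^(k-1)*h) + q.val % (2^(k-1)*h) = q.val := by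
        have := Nat.div_add_mod q.val (2^(k-1)*h)
        rw [Nat.mul_comm] at this
        exact this
      rw [hv_p] at hp
      rw [hv_q] at hq
      apply Fin.ext
      rw [← hp, ← hq]
      have er : (IkhUB.tripAux k h (p.val / (2^(k-1)*h) + 1) (p.val % (2^(k-1)*h))).2.1 + jp
          = (IkhUB.tripAux k h (q.val / (2^(k-1)*h) + 1) (q.val % (2^(k-1)*h))).2.1 + jq := by
        rw [← e_start_p, ← e_start_q]; exact hr
      have et : IkhUB.schedAux k h (p.val / (2^(k-1)*h) + 1) (p.val % (2^(k-1)*h)) jp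
          = IkhUB.schedAux k h (q.val / (2^(k-1)*h) + 1) (q.val % (2^(k-1)*h)) jq := htimes
      rw [er, et]
    · -- cost bound
      show Finset.univ.sup _ ≤ _
      apply Finset.sup_le
      intro p _
      have hvlt : p.val < k * (2^(k-1)*h) := lt_of_lt_of_eq p.isLt (IkhUB.Ikh_n k h hk)
      have hik : p.val / (2^(k-1)*h) + 1 ≤ k := by
        have := (Nat.div_lt_iff_lt_mul hN).mpr hvlt; omega
      have ht := IkhUB.trip_spec k h hk hh1 p
      have e_rel : (Ikh k h).rel p
          = (IkhUB.tripAux k h (p.val / (2^(k-1)*h) + 1) (p.val % (2^(k-1)*h))).1 := by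
        rw [← ht]
      have e_len : (Ikh k h).len p
          = (IkhUB.tripAux k h (p.val / (2^(k-1)*h) + 1) (p.val % (2^(k-1)*h))).2.2 := by
        rw [← ht]
      have hb := IkhUB.flow_bound k h (p.val / (2^(k-1)*h) + 1) (p.val % (2^(k-1)*h))
        hk hh1 (Nat.le_add_left 1 _) hik (Nat.mod_lt _ hN)
      show PInstance.comp _ _ p - (Ikh k h).rel p ≤ _
      have ec : PInstance.comp (Ikh k h)
          (fun p j => IkhUB.schedAux k h (p.val / (2^(k-1)*h) + 1) (p.val % (2^(k-1)*h)) j) p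
          = IkhUB.schedAux k h (p.val / (2^(k-1)*h) + 1) (p.val % (2^(k-1)*h))
              ((IkhUB.tripAux k h (p.val / (2^(k-1)*h) + 1) (p.val % (2^(k-1)*h))).2.2 - 1)
            + 1 := by
        show IkhUB.schedAux k h (p.val / (2^(k-1)*h) + 1) (p.val % (2^(k-1)*h))
            ((Ikh k h).len p - 1) + 1 = _
        rw [e_len]
      rw [ec, e_rel]
      omega
  refine ⟨main, ?_⟩
  obtain ⟨S, hS, hc⟩ := main
  exact le_trans (Nat.sInf_le ⟨S, hS, rfl⟩) hc
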